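/- arXiv:1802.07223 — 2 statements merged into one kernel-verified Lean document; each statement's English description precedes it below -/
import Mathlib

section
/- Let α ∈ (0,1), ρ ∈ (0,1) with αρ, αρ̂ ∈ (0,1), ρ̂ = 1−ρ. For every x > 1: ∫₁^x (x+z)(2z)^{−α}(x−z)^{αρ̂−1}(x+z)^{αρ−1} dz + ∫_{−x}^{−1} (x+z)(−2z)^{−α}(x+z)^{αρ̂−1}(x−z)^{αρ−1} dz = 2^{1−α} ∫₁^x (u−1)^{αρ̂−1}(u+1)^{αρ−1} du. -/
open MeasureTheory Real Set

lemma integ_auxR {x r : ℝ} (hr : -1 < r) {c : ℝ → ℝ}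
    (hc : ContinuousOn c (Set.uIcc 1 x)) :
    IntervalIntegrable (fun z => c z * (x - z) ^ r) volume 1 x := by
  have h1 : IntervalIntegrable (fun z => (x - z) ^ r) volume 1 x := by
    have := (intervalIntegral.intervalIntegrable_rpow' (a := x - 1) (b := 0) hr).comp_sub_left x
    simpa using this
  exact h1.continuousOn_mul hc

lemma integ_auxL {x r : ℝ} (hr : -1 < r) {c : ℝ → ℝ}
    (hc : ContinuousOn c (Set.uIcc 1 x)) :
    IntervalIntegrable (fun z => c z * (z - 1) ^ r) volume 1 x := by
  have h1 : IntervalIntegrable (fun z => (z - 1) ^ r) volume 1 x := by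
    have := (intervalIntegral.intervalIntegrable_rpow' (a := 0) (b := x - 1) hr).comp_sub_right 1
    simpa using this
  exact h1.continuousOn_mul hc

lemma key_pt (α ρ x u : ℝ) (hx : 1 < x) (hu1 : 1 ≤ u) :
    (-x/u^2) * (2*x * (2*(x/u))^(-α) * (x - x/u)^(α*(1-ρ)-1) * (x + x/u)^(α*ρ-1))
      = -(2^((1:ℝ)-α) * ((u-1)^(α*(1-ρ)-1) * (u+1)^(α*ρ-1))) := by
  have hx0 : (0:ℝ) < x := by linarith
  have hu0 : (0:ℝ) < u := by linarith
  have hw : (0:ℝ) < x/u := by positivity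
  have e1 : x - x/u = (x/u) * (u-1) := by field_simp
  have e2 : x + x/u = (x/u) * (u+1) := by field_simp
  have e3 : 2 * (x/u) = (x/u) * 2 := mul_comm _ _
  rw [e1, e2, e3, Real.mul_rpow hw.le (by norm_num : (0:ℝ) ≤ 2),
    Real.mul_rpow hw.le (by linarith : (0:ℝ) ≤ u - 1),
    Real.mul_rpow hw.le (by linarith : (0:ℝ) ≤ u + 1)]
  have hw2 : (x/u)^(-α) * (x/u)^(α*(1-ρ)-1) * (x/u)^(α*ρ-1) = u^2/x^2 := by
    rw [← Real.rpow_add hw, ← Real.rpow_add hw,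
      show -α + (α*(1-ρ)-1) + (α*ρ-1) = -(2:ℝ) by ring,
      Real.rpow_neg hw.le, show ((2:ℝ)) = ((2:ℕ):ℝ) by norm_num, Real.rpow_natCast]
    field_simp
  have h2 : (2:ℝ)^(-α) * 2 = 2^((1:ℝ)-α) := by
    rw [show (1:ℝ)-α = -α + 1 by ring, Real.rpow_add (by norm_num : (0:ℝ)<2), Real.rpow_one]
  have hx2 : x^2 ≠ 0 := by positivity
  have hu2 : u^2 ≠ 0 := by positivity
  rw [← h2]
  calc _ = (-x/u^2)*(2*x)*((x/u)^(-α) * (x/u)^(α*(1-ρ)-1) * (x/u)^(α*ρ-1))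
        * ((2:ℝ)^(-α) * (u-1)^(α*(1-ρ)-1) * (u+1)^(α*ρ-1)) := by ring
    _ = _ := by rw [hw2]; field_simp <;> ring

theorem stmt_3 (α ρ : ℝ) (hα : α ∈ Set.Ioo (0:ℝ) 1) (hρ : ρ ∈ Set.Ioo (0:ℝ) 1)
    (hαρ : α * ρ ∈ Set.Ioo (0:ℝ) 1) (hαρ' : α * (1 - ρ) ∈ Set.Ioo (0:ℝ) 1)
    (x : ℝ) (hx : 1 < x) :
    (∫ z in (1:ℝ)..x,
        (x + z) * (2 * z) ^ (-α) * (x - z) ^ (α * (1 - ρ) - 1) * (x + z) ^ (α * ρ - 1))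
      + (∫ z in (-x)..(-1:ℝ),
        (x + z) * (-(2 * z)) ^ (-α) * (x + z) ^ (α * (1 - ρ) - 1) * (x - z) ^ (α * ρ - 1))
      = 2 ^ ((1:ℝ) - α) *
        ∫ u in (1:ℝ)..x, (u - 1) ^ (α * (1 - ρ) - 1) * (u + 1) ^ (α * ρ - 1) := by
  have hx0 : (0:ℝ) < x := by linarith
  set A := α * (1 - ρ) - 1 with hAdef
  set B := α * ρ - 1 with hBdef
  have hA : -1 < A := by simp only [hAdef]; nlinarith [hαρ'.1]
  have hA0 : A < 0 := by simp only [hAdef]; nlinarith [hαρ'.2]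
  have hB : -1 < B := by simp only [hBdef]; nlinarith [hαρ.1]
  have huIcc : Set.uIcc (1:ℝ) x = Set.Icc 1 x := Set.uIcc_of_le hx.le
  -- continuity facts on [1,x]
  have hcz : ∀ z ∈ Set.uIcc (1:ℝ) x, (1:ℝ) ≤ z := by
    intro z hz; rw [huIcc] at hz; exact hz.1
  have hc2z : ContinuousOn (fun z : ℝ => (2*z) ^ (-α)) (Set.uIcc 1 x) := by
    apply ContinuousOn.rpow_const (by fun_prop)
    intro z hz; left; have := hcz z hz; positivity
  have hcxz : ContinuousOn (fun z : ℝ => (x+z) ^ B) (Set.uIcc 1 x) := by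
    apply ContinuousOn.rpow_const (by fun_prop)
    intro z hz; left; have := hcz z hz; positivity
  -- integrability of the three z-integrands
  have hi1 : IntervalIntegrable
      (fun z => (x + z) * (2 * z) ^ (-α) * (x - z) ^ A * (x + z) ^ B) volume 1 x := by
    have h := integ_auxR (x := x) hA
      (c := fun z => (x + z) * (2*z) ^ (-α) * (x+z) ^ B)
      (((continuousOn_const.add continuousOn_id).mul hc2z).mul hcxz)
    have : (fun z => (x + z) * (2 * z) ^ (-α) * (x - z) ^ A * (x + z) ^ B)
        = fun z => ((x + z) * (2*z) ^ (-α) * (x+z) ^ B) * (x - z) ^ A := by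
      funext z; ring
    rw [this]; exact h
  have hi2 : IntervalIntegrable
      (fun z => (x - z) * (2 * z) ^ (-α) * (x - z) ^ A * (x + z) ^ B) volume 1 x := by
    have h := integ_auxR (x := x) hA
      (c := fun z => (x - z) * (2*z) ^ (-α) * (x+z) ^ B)
      (((continuousOn_const.sub continuousOn_id).mul hc2z).mul hcxz)
    have : (fun z => (x - z) * (2 * z) ^ (-α) * (x - z) ^ A * (x + z) ^ B)
        = fun z => ((x - z) * (2*z) ^ (-α) * (x+z) ^ B) * (x - z) ^ A := by
      funext z; ring
    rw [this]; exact h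
  have hiJ : IntervalIntegrable
      (fun z => 2*x * (2 * z) ^ (-α) * (x - z) ^ A * (x + z) ^ B) volume 1 x := by
    have h := integ_auxR (x := x) hA
      (c := fun z => 2*x * (2*z) ^ (-α) * (x+z) ^ B)
      ((continuousOn_const.mul hc2z).mul hcxz)
    have : (fun z => 2*x * (2 * z) ^ (-α) * (x - z) ^ A * (x + z) ^ B)
        = fun z => (2*x * (2*z) ^ (-α) * (x+z) ^ B) * (x - z) ^ A := by
      funext z; ring
    rw [this]; exact h
  have hiG : IntervalIntegrable
      (fun u => (u - 1) ^ A * (u + 1) ^ B) volume 1 x := by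
    have hcup : ContinuousOn (fun u : ℝ => (u+1) ^ B) (Set.uIcc 1 x) := by
      apply ContinuousOn.rpow_const (by fun_prop)
      intro z hz; left; have := hcz z hz; positivity
    have h := integ_auxL (x := x) hA (c := fun u => (u+1) ^ B) hcup
    have : (fun u : ℝ => (u - 1) ^ A * (u + 1) ^ B)
        = fun u => ((u+1) ^ B) * (u - 1) ^ A := by funext u; ring
    rw [this]; exact h
  -- Step 1: rewrite second integral via z ↦ -z
  have e2 : (∫ z in (-x)..(-1:ℝ),
        (x + z) * (-(2 * z)) ^ (-α) * (x + z) ^ A * (x - z) ^ B)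
      = ∫ z in (1:ℝ)..x, (x - z) * (2 * z) ^ (-α) * (x - z) ^ A * (x + z) ^ B := by
    rw [← intervalIntegral.integral_comp_neg
      (fun z => (x + z) * (-(2 * z)) ^ (-α) * (x + z) ^ A * (x - z) ^ B)]
    apply intervalIntegral.integral_congr
    intro z _
    norm_num [sub_eq_add_neg]
  -- Step 2: combine
  have e3 : (∫ z in (1:ℝ)..x,
        (x + z) * (2 * z) ^ (-α) * (x - z) ^ A * (x + z) ^ B)
      + (∫ z in (1:ℝ)..x, (x - z) * (2 * z) ^ (-α) * (x - z) ^ A * (x + z) ^ B)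
      = ∫ z in (1:ℝ)..x, 2*x * (2 * z) ^ (-α) * (x - z) ^ A * (x + z) ^ B := by
    rw [← intervalIntegral.integral_add hi1 hi2]
    apply intervalIntegral.integral_congr
    intro z _; ring
  -- Step 3: substitution u = x/z
  have e4 : (∫ z in (1:ℝ)..x, 2*x * (2 * z) ^ (-α) * (x - z) ^ A * (x + z) ^ B)
      = 2 ^ ((1:ℝ) - α) * ∫ u in (1:ℝ)..x, (u - 1) ^ A * (u + 1) ^ B := by
    set g : ℝ → ℝ := fun z => 2*x * (2 * z) ^ (-α) * (x - z) ^ A * (x + z) ^ B with hg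
    have hmin : min (1:ℝ) x = 1 := min_eq_left hx.le
    have hmax : max (1:ℝ) x = x := max_eq_right hx.le
    have hmaps : ∀ u ∈ Set.uIcc (1:ℝ) x, x / u ∈ Set.Icc (1:ℝ) x := by
      intro u hu
      rw [huIcc] at hu
      have hu0 : (0:ℝ) < u := by linarith [hu.1]
      constructor
      · rw [le_div_iff₀ hu0]; linarith [hu.2]
      · rw [div_le_iff₀ hu0]; nlinarith [hu.1]
    have hsub := intervalIntegral.integral_comp_smul_deriv''' (a := 1) (b := x)
      (f := fun u => x / u) (f' := fun u => -x / u^2) (g := g)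
      (by
        apply continuousOn_const.div continuousOn_id
        intro u hu; have := hcz u hu; positivity)
      (by
        rw [hmin, hmax]
        intro u hu
        have hu0 : u ≠ 0 := by have := hu.1; positivity
        have : HasDerivAt (fun u : ℝ => x / u) (-x / u^2) u := by
          have h := ((hasDerivAt_inv hu0).const_mul x)
          simpa [div_eq_mul_inv, neg_div, mul_comm, mul_assoc] using h
        exact this.hasDerivWithinAt)
      (by
        rw [hmin, hmax]
        apply ContinuousOn.mono (s := Set.Ioo (1:ℝ) x)
        · apply ContinuousOn.mul
          apply ContinuousOn.mul
          apply ContinuousOn.mul continuousOn_const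
          · apply ContinuousOn.rpow_const (by fun_prop)
            intro z hz; left; have := hz.1; positivity
          · apply ContinuousOn.rpow_const (by fun_prop)
            intro z hz; left; have h1 := hz.2; intro h
            nlinarith [hz.1]
          · apply ContinuousOn.rpow_const (by fun_prop)
            intro z hz; left; have := hz.1; positivity
        · rintro _ ⟨u, hu, rfl⟩
          constructor
          · rw [lt_div_iff₀ (by linarith [hu.1] : (0:ℝ) < u)]; linarith [hu.2]
          · rw [div_lt_iff₀ (by linarith [hu.1] : (0:ℝ) < u)]; nlinarith [hu.1]
        )
      (by
        apply MeasureTheory.IntegrableOn.mono_set (t := Set.Icc (1:ℝ) x)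
        · rw [← huIcc, ← intervalIntegrable_iff']; exact hiJ
        · rintro _ ⟨u, hu, rfl⟩; exact hmaps u hu)
      (by
        have hInt : IntegrableOn (fun u : ℝ => -(2^((1:ℝ)-α) * ((u-1)^A * (u+1)^B)))
            (Set.uIcc 1 x) volume := by
          rw [← intervalIntegrable_iff']
          exact (hiG.const_mul _).neg
        apply hInt.congr_fun ?_ measurableSet_uIcc
        intro u hu
        have h1 : (1:ℝ) ≤ u := hcz u hu
        simp only [Function.comp, smul_eq_mul, hg]
        exact (key_pt α ρ x u hx h1).symm)
    have hL : ∫ u in (1:ℝ)..x, (fun u : ℝ => -x / u^2) u • ((g ∘ fun u => x / u) u)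
        = ∫ u in (1:ℝ)..x, -(2 ^ ((1:ℝ) - α) * ((u - 1) ^ A * (u + 1) ^ B)) := by
      apply intervalIntegral.integral_congr
      intro u hu
      simp only [Function.comp, smul_eq_mul, hg]
      exact key_pt α ρ x u hx (hcz u hu)
    rw [hL] at hsub
    rw [intervalIntegral.integral_neg, intervalIntegral.integral_const_mul] at hsub
    simp only [div_self hx0.ne', div_one] at hsub
    rw [show intervalIntegral g x 1 volume = -(intervalIntegral g 1 x volume) from
      intervalIntegral.integral_symm 1 x] at hsub
    linarith [hsub]
  rw [e2, e3, e4]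
end

section
/- Let α ∈ (1,2), ρ̂ = 1−ρ with αρ, αρ̂ ∈ (0,1), ψ_{αρ}(z) = (z−1)^{αρ̂−1}(z+1)^{αρ−1}, ψ_{αρ̂}(z) = (z−1)^{αρ−1}(z+1)^{αρ̂−1}, z(x,y) = (xy−1)/(y−x), and for 1 < x < y define u(x,y) = (y−x)^{α−1}( ∫₁^{z(x,y)} ψ_{αρ}(v) dv − (α−1)(y−x)^{1−α} ∫₁^y ψ_{αρ̂}(v) dv · ∫₁^x ψ_{αρ}(v) dv ). Then for every fixed x > 1: lim_{y→∞} u(x,y) = 2(1−αρ̂) (∫₁^∞ ψ_{αρ̂}(v)/(v+1) dv) · ∫₁^x ψ_{αρ}(v) dv. -/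
open MeasureTheory Real Filter

lemma aux_contpsi (p q : ℝ) {s : Set ℝ} (hs : ∀ v ∈ s, (1:ℝ) < v) :
    ContinuousOn (fun v : ℝ => (v - 1) ^ p * (v + 1) ^ q) s := by
  apply ContinuousOn.mul
  · exact ContinuousOn.rpow_const (by fun_prop)
      (fun v hv => Or.inl (ne_of_gt (sub_pos.mpr (hs v hv))))
  · exact ContinuousOn.rpow_const (by fun_prop)
      (fun v hv => Or.inl (by have := hs v hv; positivity))

lemma aux_II (p : ℝ) (hp : 0 < p) {y : ℝ} (hy : 1 ≤ y) (g : ℝ → ℝ)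
    (hg : ContinuousOn g (Set.Icc 1 y)) :
    IntervalIntegrable (fun v => (v - 1) ^ (p - 1) * g v) volume 1 y := by
  have h1 : IntervalIntegrable (fun v => (v - 1) ^ (p - 1)) volume 1 y := by
    have := (intervalIntegral.intervalIntegrable_rpow' (a := 0) (b := y - 1)
      (r := p - 1) (by linarith)).comp_sub_right 1
    simpa using this
  apply h1.mul_continuousOn
  rwa [Set.uIcc_of_le hy]

lemma aux_deriv (b b' v : ℝ) (hv : 1 < v) :
    HasDerivAt (fun w => (w - 1) ^ b * (w + 1) ^ (b' - 1))
      ((b + b' - 1) * ((v - 1) ^ (b - 1) * (v + 1) ^ (b' - 1))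
        + 2 * (1 - b') * ((v - 1) ^ (b - 1) * ((v + 1) ^ (b' - 1) / (v + 1)))) v := by
  have hs : v - 1 ≠ 0 := by linarith
  have ht : (0:ℝ) < v + 1 := by linarith
  have h1 : HasDerivAt (fun w : ℝ => (w - 1) ^ b) (1 * b * (v - 1) ^ (b - 1)) v :=
    ((hasDerivAt_id v).sub_const 1).rpow_const (Or.inl hs)
  have h2 : HasDerivAt (fun w : ℝ => (w + 1) ^ (b' - 1))
      (1 * (b' - 1) * (v + 1) ^ (b' - 1 - 1)) v :=
    ((hasDerivAt_id v).add_const 1).rpow_const (Or.inl (ne_of_gt ht))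
  have := h1.mul h2
  refine this.congr_deriv ?_
  have e1 : (v - 1) ^ b = (v - 1) ^ (b - 1) * (v - 1) := by
    rw [← Real.rpow_add_one hs]; norm_num
  have e2 : (v + 1) ^ (b' - 1 - 1) = (v + 1) ^ (b' - 1) / (v + 1) := by
    rw [Real.rpow_sub ht, Real.rpow_one]
  rw [e1, e2]
  field_simp
  ring

lemma aux_FTC (b b' : ℝ) (hb : 0 < b) {y : ℝ} (hy : 1 ≤ y) :
    (∫ v in (1:ℝ)..y, ((b + b' - 1) * ((v - 1) ^ (b - 1) * (v + 1) ^ (b' - 1))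
      + 2 * (1 - b') * ((v - 1) ^ (b - 1) * ((v + 1) ^ (b' - 1) / (v + 1)))))
      = (y - 1) ^ b * (y + 1) ^ (b' - 1) := by
  have hg1 : ContinuousOn (fun v : ℝ => (v + 1) ^ (b' - 1)) (Set.Icc 1 y) :=
    ContinuousOn.rpow_const (by fun_prop)
      (fun v hv => Or.inl (by have := hv.1; positivity))
  have hg2 : ContinuousOn (fun v : ℝ => (v + 1) ^ (b' - 1) / (v + 1)) (Set.Icc 1 y) :=
    hg1.div (by fun_prop) (fun v hv => by have := hv.1; positivity)
  have hint1 := aux_II b hb hy _ hg1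
  have hint2 := aux_II b hb hy _ hg2
  have hint := (hint1.const_mul (b + b' - 1)).add (hint2.const_mul (2 * (1 - b')))
  have hcont : ContinuousOn (fun w : ℝ => (w - 1) ^ b * (w + 1) ^ (b' - 1)) (Set.Icc 1 y) := by
    apply ContinuousOn.mul
    · exact ContinuousOn.rpow_const (by fun_prop) (fun v hv => Or.inr hb.le)
    · exact hg1
  have h := intervalIntegral.integral_eq_sub_of_hasDerivAt_of_le hy hcont
    (fun v hv => aux_deriv b b' v hv.1) hint
  rw [h]
  simp [Real.zero_rpow hb.ne']

lemma aux_Ioi (b b' : ℝ) (hb0 : 0 < b) (hb1 : b < 1) (hb'1 : b' < 1) :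
    IntegrableOn (fun v : ℝ => (v - 1) ^ (b - 1) * ((v + 1) ^ (b' - 1) / (v + 1)))
      (Set.Ioi 1) volume := by
  rw [show Set.Ioi (1:ℝ) = Set.Ioc 1 2 ∪ Set.Ioi 2 from
    (Set.Ioc_union_Ioi_eq_Ioi (by norm_num)).symm]
  apply IntegrableOn.union
  · have hg2 : ContinuousOn (fun v : ℝ => (v + 1) ^ (b' - 1) / (v + 1)) (Set.Icc 1 2) := by
      apply ContinuousOn.div
      · exact ContinuousOn.rpow_const (by fun_prop)
          (fun v hv => Or.inl (by have := hv.1; positivity))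
      · fun_prop
      · intro v hv; have := hv.1; positivity
    exact (intervalIntegrable_iff_integrableOn_Ioc_of_le (by norm_num)).mp
      (aux_II b hb0 (by norm_num) _ hg2)
  · apply Integrable.mono' (g := fun v : ℝ => v ^ (b' - 2))
    · exact integrableOn_Ioi_rpow_of_lt (by linarith) (by norm_num)
    · apply ContinuousOn.aestronglyMeasurable _ measurableSet_Ioi
      apply ContinuousOn.mul
      · exact ContinuousOn.rpow_const (by fun_prop)
          (fun v hv => Or.inl (by have : (2:ℝ) < v := hv; intro h; linarith [sub_eq_zero.mp h]))
      · apply ContinuousOn.div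
        · exact ContinuousOn.rpow_const (by fun_prop)
            (fun v hv => Or.inl (by have : (2:ℝ) < v := hv; positivity))
        · fun_prop
        · intro v hv; have : (2:ℝ) < v := hv; positivity
    · refine (ae_restrict_iff' measurableSet_Ioi).mpr (ae_of_all _ fun v hv => ?_)
      have h2v : (2:ℝ) < v := hv
      have hv0 : (0:ℝ) < v := by linarith
      have h1 : (v - 1) ^ (b - 1) ≤ 1 := by
        calc (v - 1) ^ (b - 1) ≤ 1 ^ (b - 1) :=
              Real.rpow_le_rpow_of_nonpos one_pos (by linarith) (by linarith)
          _ = 1 := Real.one_rpow _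
      have h2 : (v + 1) ^ (b' - 1) / (v + 1) ≤ v ^ (b' - 1) / v := by
        apply div_le_div₀ (Real.rpow_nonneg hv0.le _)
          (Real.rpow_le_rpow_of_nonpos hv0 (by linarith) (by linarith)) hv0 (by linarith)
      have h3 : v ^ (b' - 1) / v = v ^ (b' - 2) := by
        rw [show b' - 2 = b' - 1 - 1 by ring, Real.rpow_sub hv0 (b' - 1) 1, Real.rpow_one]
      rw [Real.norm_eq_abs, abs_of_nonneg (mul_nonneg (Real.rpow_nonneg (by linarith) _)
        (div_nonneg (Real.rpow_nonneg (by linarith) _) (by linarith)))]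
      calc (v - 1) ^ (b - 1) * ((v + 1) ^ (b' - 1) / (v + 1))
          ≤ 1 * (v ^ (b' - 1) / v) := by
            apply mul_le_mul h1 h2 (by positivity) (by norm_num)
        _ = v ^ (b' - 2) := by rw [one_mul, h3]

lemma aux_D (x α b b' : ℝ) (hx : 1 < x) (hα1 : 1 < α) (hα2 : α < 2)
    (hbb' : b + b' = α) :
    Tendsto (fun y : ℝ => (y - x) ^ (α - 1) - (y - 1) ^ b * (y + 1) ^ (b' - 1))
      atTop (nhds 0) := by
  set F : ℝ → ℝ := fun t => (1 - x * t) ^ (α - 1) - (1 - t) ^ b * (1 + t) ^ (b' - 1) with hF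
  have hF0 : F 0 = 0 := by simp [hF]
  obtain ⟨d, hd⟩ : ∃ d, HasDerivAt F d 0 := by
    have h1 : HasDerivAt (fun t : ℝ => 1 - x * t) (0 - x * 1) 0 :=
      (hasDerivAt_const _ _).sub ((hasDerivAt_id 0).const_mul x)
    have h2 : HasDerivAt (fun t : ℝ => 1 - t) (-1) 0 := (hasDerivAt_id 0).const_sub 1
    have h3 : HasDerivAt (fun t : ℝ => 1 + t) (0 + 1) 0 :=
      (hasDerivAt_const _ _).add (hasDerivAt_id 0)
    refine ⟨_, (HasDerivAt.sub (h1.rpow_const ?_) ((h2.rpow_const ?_).mul (h3.rpow_const ?_)))⟩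
    · exact Or.inl (by norm_num)
    · exact Or.inl (by norm_num)
    · exact Or.inl (by norm_num)
  have hslope : Tendsto (fun t : ℝ => F t / t) (nhdsWithin 0 {(0:ℝ)}ᶜ) (nhds d) := by
    have h := hasDerivAt_iff_tendsto_slope.mp hd
    refine h.congr (fun t => ?_)
    rw [slope_def_field, hF0]
    ring
  have hinv : Tendsto (fun y : ℝ => y⁻¹) atTop (nhdsWithin 0 {(0:ℝ)}ᶜ) :=
    tendsto_inv_atTop_nhdsGT_zero.mono_right
      (nhdsWithin_mono 0 (fun a (ha : a ∈ Set.Ioi 0) => ne_of_gt ha))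
  have hS : Tendsto (fun y : ℝ => F y⁻¹ / y⁻¹) atTop (nhds d) := hslope.comp hinv
  have hP : Tendsto (fun y : ℝ => y ^ (α - 2)) atTop (nhds 0) := by
    rw [show α - 2 = -(2 - α) by ring]
    exact tendsto_rpow_neg_atTop (by linarith)
  have hmul := hP.mul hS
  rw [zero_mul] at hmul
  refine hmul.congr' ?_
  filter_upwards [eventually_gt_atTop (max x 1)] with y hy
  have hyx : x < y := lt_of_le_of_lt (le_max_left _ _) hy
  have hy1 : (1:ℝ) < y := lt_of_le_of_lt (le_max_right _ _) hy
  have hy0 : (0:ℝ) < y := by linarith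
  have e0 : y ^ (α - 2) * y = y ^ (α - 1) := by
    rw [show α - 1 = (α - 2) + 1 by ring, Real.rpow_add_one hy0.ne']
  have hx1 : (0:ℝ) ≤ 1 - x * y⁻¹ := by
    rw [sub_nonneg, show x * y⁻¹ = x / y by ring]
    exact le_of_lt ((div_lt_one hy0).mpr hyx)
  have hy1' : (0:ℝ) ≤ 1 - y⁻¹ := by
    rw [sub_nonneg]
    exact le_of_lt (by rw [inv_lt_one_iff₀]; right; exact hy1)
  have hy1'' : (0:ℝ) ≤ 1 + y⁻¹ := by positivity
  have e1 : y ^ (α - 1) * (1 - x * y⁻¹) ^ (α - 1) = (y - x) ^ (α - 1) := by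
    rw [← Real.mul_rpow hy0.le hx1]
    congr 1
    field_simp
  have e2 : y ^ (α - 1) * ((1 - y⁻¹) ^ b * (1 + y⁻¹) ^ (b' - 1))
      = (y - 1) ^ b * (y + 1) ^ (b' - 1) := by
    have : y ^ (α - 1) = y ^ b * y ^ (b' - 1) := by
      rw [← Real.rpow_add hy0]; congr 1; linarith
    rw [this, show y ^ b * y ^ (b' - 1) * ((1 - y⁻¹) ^ b * (1 + y⁻¹) ^ (b' - 1))
      = (y ^ b * (1 - y⁻¹) ^ b) * (y ^ (b' - 1) * (1 + y⁻¹) ^ (b' - 1)) by ring,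
      ← Real.mul_rpow hy0.le hy1', ← Real.mul_rpow hy0.le hy1'']
    congr 2 <;> field_simp
  have hFy : F y⁻¹ = (1 - x * y⁻¹) ^ (α - 1) - (1 - y⁻¹) ^ b * (1 + y⁻¹) ^ (b' - 1) := rfl
  have hdiv : F y⁻¹ / y⁻¹ = F y⁻¹ * y := by
    rw [div_inv_eq_mul]
  rw [hdiv, hFy]
  linear_combination ((1 - x * y⁻¹) ^ (α - 1) - (1 - y⁻¹) ^ b * (1 + y⁻¹) ^ (b' - 1)) * e0
    + e1 - e2

lemma aux_A (x α p q : ℝ) (hx : 1 < x) (hα1 : 1 < α) (hα2 : α < 2) :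
    Tendsto (fun y : ℝ => (y - x) ^ (α - 1) *
      ∫ v in x..((x * y - 1) / (y - x)), (v - 1) ^ p * (v + 1) ^ q) atTop (nhds 0) := by
  have hcont : ContinuousOn (fun v : ℝ => (v - 1) ^ p * (v + 1) ^ q) (Set.Icc x (x + 1)) :=
    aux_contpsi p q (fun v hv => lt_of_lt_of_le hx hv.1)
  obtain ⟨M, hM⟩ := isCompact_Icc.exists_bound_of_continuousOn hcont
  have hM0 : 0 ≤ M := le_trans (norm_nonneg _) (hM x ⟨le_refl x, by linarith⟩)
  apply squeeze_zero_norm'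
    (a := fun y : ℝ => M * (x ^ 2 - 1) * (y - x) ^ (α - 2))
  · filter_upwards [eventually_ge_atTop (x * x + x)] with y hy
    have hyx : 0 < y - x := by nlinarith
    have hzx : (x * y - 1) / (y - x) - x = (x ^ 2 - 1) / (y - x) := by
      field_simp; ring
    have hxz : x < (x * y - 1) / (y - x) := by
      have h1 : 0 < (x * y - 1) / (y - x) - x := hzx ▸ div_pos (by nlinarith) hyx
      linarith
    have hzle : (x * y - 1) / (y - x) ≤ x + 1 := by
      have h1 : (x ^ 2 - 1) / (y - x) ≤ 1 := by
        rw [div_le_one hyx]; nlinarith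
      linarith [hzx ▸ h1]
    have hbound : ‖∫ v in x..((x * y - 1) / (y - x)), (v - 1) ^ p * (v + 1) ^ q‖
        ≤ M * |(x * y - 1) / (y - x) - x| := by
      apply intervalIntegral.norm_integral_le_of_norm_le_const
      intro v hv
      rw [Set.uIoc_of_le hxz.le] at hv
      exact hM v ⟨hv.1.le, hv.2.trans hzle⟩
    rw [norm_mul, Real.norm_eq_abs, abs_of_nonneg (Real.rpow_nonneg hyx.le _)]
    calc (y - x) ^ (α - 1) * ‖∫ v in x..((x * y - 1) / (y - x)), (v - 1) ^ p * (v + 1) ^ q‖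
        ≤ (y - x) ^ (α - 1) * (M * |(x * y - 1) / (y - x) - x|) :=
          mul_le_mul_of_nonneg_left hbound (Real.rpow_nonneg hyx.le _)
      _ = M * (x ^ 2 - 1) * (y - x) ^ (α - 2) := by
          rw [hzx, abs_of_nonneg (div_nonneg (by nlinarith) hyx.le),
            show α - 2 = α - 1 - 1 by ring, Real.rpow_sub hyx (α - 1) 1, Real.rpow_one]
          field_simp
  · have h1 : Tendsto (fun y : ℝ => (y - x) ^ (α - 2)) atTop (nhds 0) := by
      rw [show α - 2 = -(2 - α) by ring]
      exact (tendsto_rpow_neg_atTop (by linarith)).comp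
        (tendsto_atTop_add_const_right atTop (-x) tendsto_id)
    have := h1.const_mul (M * (x ^ 2 - 1))
    rwa [mul_zero] at this

lemma aux_alg (P W Q K A' G J c d : ℝ) (key : P * W = 1) (hftc : d * Q + c * J = G) :
    P * ((K + A') - d * W * Q * K) = P * A' + ((P - G) + c * J) * K := by
  linear_combination (-(d * Q * K)) * key + (-K) * hftc

theorem stmt_12 (α ρ : ℝ) (hα : α ∈ Set.Ioo (1:ℝ) 2)
    (hαρ : α * ρ ∈ Set.Ioo (0:ℝ) 1) (hαρ' : α * (1 - ρ) ∈ Set.Ioo (0:ℝ) 1)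
    (ψ ψ' : ℝ → ℝ)
    (hψ : ∀ z, ψ z = (z - 1) ^ (α * (1 - ρ) - 1) * (z + 1) ^ (α * ρ - 1))
    (hψ' : ∀ z, ψ' z = (z - 1) ^ (α * ρ - 1) * (z + 1) ^ (α * (1 - ρ) - 1))
    (u : ℝ → ℝ → ℝ)
    (hu : ∀ x y : ℝ, 1 < x → x < y →
      u x y = (y - x) ^ (α - 1) *
        ((∫ v in (1:ℝ)..((x * y - 1) / (y - x)), ψ v)
          - (α - 1) * (y - x) ^ ((1:ℝ) - α) * (∫ v in (1:ℝ)..y, ψ' v)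
              * ∫ v in (1:ℝ)..x, ψ v))
    (x : ℝ) (hx : 1 < x) :
    Tendsto (fun y => u x y) atTop
      (nhds (2 * (1 - α * (1 - ρ)) * (∫ v in Set.Ioi (1:ℝ), ψ' v / (v + 1))
        * ∫ v in (1:ℝ)..x, ψ v)) := by
  obtain ⟨hα1, hα2⟩ := hα
  obtain ⟨hb0, hb1⟩ := hαρ
  obtain ⟨hb'0, hb'1⟩ := hαρ'
  have hψf : ψ = fun z => (z - 1) ^ (α * (1 - ρ) - 1) * (z + 1) ^ (α * ρ - 1) := funext hψ
  have hψ'f : ψ' = fun z => (z - 1) ^ (α * ρ - 1) * (z + 1) ^ (α * (1 - ρ) - 1) := funext hψ'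
  subst hψf hψ'f
  set b := α * ρ with hbdef
  set b' := α * (1 - ρ) with hb'def
  have hbb' : b + b' = α := by rw [hbdef, hb'def]; ring
  simp only [mul_div_assoc]
  beta_reduce at hu
  have hJ := intervalIntegral_tendsto_integral_Ioi 1 (aux_Ioi b b' hb0 hb1 hb'1)
    (tendsto_id (α := ℝ))
  have hD := aux_D x α b b' hx hα1 hα2 hbb'
  have hA := aux_A x α (b' - 1) (b - 1) hx hα1 hα2
  have hlim := hA.add ((hD.add (hJ.const_mul (2 * (1 - b')))).mul_const
    (∫ v in (1:ℝ)..x, (v - 1) ^ (b' - 1) * (v + 1) ^ (b - 1)))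
  rw [show (0:ℝ) + (0 + 2 * (1 - b') *
      (∫ v in Set.Ioi (1:ℝ), (v - 1) ^ (b - 1) * ((v + 1) ^ (b' - 1) / (v + 1)))) *
      (∫ v in (1:ℝ)..x, (v - 1) ^ (b' - 1) * (v + 1) ^ (b - 1))
      = 2 * (1 - b') * (∫ v in Set.Ioi (1:ℝ), (v - 1) ^ (b - 1) * ((v + 1) ^ (b' - 1) / (v + 1)))
      * (∫ v in (1:ℝ)..x, (v - 1) ^ (b' - 1) * (v + 1) ^ (b - 1)) from by ring] at hlim
  refine Tendsto.congr' ?_ hlim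
  filter_upwards [eventually_ge_atTop (x * x + x)] with y hy
  have hyx : 0 < y - x := by nlinarith
  have hxy : x < y := by linarith
  have hy1 : (1:ℝ) < y := by nlinarith
  have hzx : (x * y - 1) / (y - x) - x = (x ^ 2 - 1) / (y - x) := by
    field_simp; ring
  have hxz : x < (x * y - 1) / (y - x) := by
    have h1 : 0 < (x * y - 1) / (y - x) - x := hzx ▸ div_pos (by nlinarith) hyx
    linarith
  have hI1x : IntervalIntegrable (fun v => (v - 1) ^ (b' - 1) * (v + 1) ^ (b - 1)) volume 1 x :=
    aux_II b' hb'0 hx.le _ (ContinuousOn.rpow_const (by fun_prop)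
      (fun v hv => Or.inl (by have := hv.1; positivity)))
  have hIxz : IntervalIntegrable (fun v => (v - 1) ^ (b' - 1) * (v + 1) ^ (b - 1))
      volume x ((x * y - 1) / (y - x)) := by
    apply ContinuousOn.intervalIntegrable
    apply aux_contpsi
    intro v hv
    rw [Set.uIcc_of_le hxz.le] at hv
    exact lt_of_lt_of_le hx hv.1
  have key : (y - x) ^ (α - 1) * (y - x) ^ ((1:ℝ) - α) = 1 := by
    rw [← Real.rpow_add hyx]; norm_num
  have hg1 : ContinuousOn (fun v : ℝ => (v + 1) ^ (b' - 1)) (Set.Icc 1 y) :=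
    ContinuousOn.rpow_const (by fun_prop)
      (fun v hv => Or.inl (by have := hv.1; positivity))
  have hg2 : ContinuousOn (fun v : ℝ => (v + 1) ^ (b' - 1) / (v + 1)) (Set.Icc 1 y) :=
    hg1.div (by fun_prop) (fun v hv => by have := hv.1; positivity)
  have hint1 := aux_II b hb0 hy1.le _ hg1
  have hint2 := aux_II b hb0 hy1.le _ hg2
  have hFTC := aux_FTC b b' hb0 hy1.le
  rw [intervalIntegral.integral_add (hint1.const_mul _) (hint2.const_mul _),
    intervalIntegral.integral_const_mul, intervalIntegral.integral_const_mul, hbb'] at hFTC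
  rw [hu x y hx hxy, ← intervalIntegral.integral_add_adjacent_intervals hI1x hIxz]
  exact (aux_alg _ _ _ _ _ _ _ _ _ key hFTC).symm
end
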